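/- Suppose w is a probability vector on a finite action set A, t ∈ ℕ, and A_t = Σ_{a} N_a(t) c_a x_a x_aᵀ where N_a(t) are nonnegative integers with Σ_a N_a(t) = t and |N_a(t) − t·w_a| ≤ ε for all a, with c_a > 0 and x_a ∈ ℝ^d, ‖x_a‖ ≤ 2, c_a ≤ C. Then for every v, vᵀA_t⁻¹ v ≤ vᵀ(t·A(w) − 4·C·ε·|A|·I)⁻¹ v whenever t·A(w) − 4·C·ε·|A|·I is positive definite, where A(w) = Σ_a w_a c_a x_a x_aᵀ. -/

import Mathlib

open Matrix

lemma sum_mulVec' {d : ℕ} {ι : Type*} [Fintype ι] (M : ι → Matrix (Fin d) (Fin d) ℝ)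
    (v : Fin d → ℝ) : (∑ a : ι, M a).mulVec v = ∑ a : ι, (M a).mulVec v := by
  funext i
  simp [Matrix.mulVec, dotProduct, Matrix.sum_apply, Finset.sum_apply, Finset.sum_mul]
  rw [Finset.sum_comm]

lemma dotProduct_sum' {d : ℕ} {ι : Type*} [Fintype ι] (v : Fin d → ℝ) (f : ι → Fin d → ℝ) :
    v ⬝ᵥ (∑ a : ι, f a) = ∑ a : ι, v ⬝ᵥ f a := by
  simp [dotProduct, Finset.sum_apply, Finset.mul_sum]
  rw [Finset.sum_comm]

lemma vecMulVec_mulVec' {d : ℕ} (x v : Fin d → ℝ) :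
    (Matrix.vecMulVec x x).mulVec v = (x ⬝ᵥ v) • x := by
  funext i
  simp only [Matrix.mulVec, Matrix.vecMulVec_apply, dotProduct, Pi.smul_apply, smul_eq_mul,
    Finset.sum_mul]
  exact Finset.sum_congr rfl fun j _ => by ring

lemma quad_smul_vecMulVec {d : ℕ} (r : ℝ) (x v : Fin d → ℝ) :
    v ⬝ᵥ (r • Matrix.vecMulVec x x).mulVec v = r * (x ⬝ᵥ v)^2 := by
  rw [Matrix.smul_mulVec, vecMulVec_mulVec', dotProduct_smul, dotProduct_smul,
    smul_eq_mul, smul_eq_mul, dotProduct_comm v x]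
  ring

lemma quad_sum {d : ℕ} {ι : Type*} [Fintype ι] (r : ι → ℝ) (x : ι → Fin d → ℝ)
    (v : Fin d → ℝ) :
    v ⬝ᵥ (∑ a : ι, r a • Matrix.vecMulVec (x a) (x a)).mulVec v
      = ∑ a : ι, r a * (x a ⬝ᵥ v)^2 := by
  rw [sum_mulVec', dotProduct_sum']
  exact Finset.sum_congr rfl fun a _ => quad_smul_vecMulVec (r a) (x a) v

theorem stmt_11 {d : ℕ} {ι : Type*} [Fintype ι]
    (w : ι → ℝ) (hw0 : ∀ a, 0 ≤ w a) (hw1 : ∑ a, w a = 1)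
    (t : ℕ) (N : ι → ℕ) (hN : ∑ a, N a = t)
    (ε : ℝ) (hε : 0 ≤ ε) (htrack : ∀ a, |(N a : ℝ) - (t : ℝ) * w a| ≤ ε)
    (c : ι → ℝ) (C : ℝ) (hc : ∀ a, 0 < c a) (hC : ∀ a, c a ≤ C)
    (x : ι → Fin d → ℝ) (hx : ∀ a, x a ⬝ᵥ x a ≤ 4)
    (At Aw : Matrix (Fin d) (Fin d) ℝ)
    (hAt : At = ∑ a : ι, ((N a : ℝ) * c a) • Matrix.vecMulVec (x a) (x a))
    (hAw : Aw = ∑ a : ι, (w a * c a) • Matrix.vecMulVec (x a) (x a))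
    (hpos : ((t : ℝ) • Aw - (4 * C * ε * (Fintype.card ι : ℝ)) • (1 : Matrix (Fin d) (Fin d) ℝ)).PosDef) :
    ∀ v : Fin d → ℝ,
      v ⬝ᵥ At⁻¹.mulVec v ≤
        v ⬝ᵥ ((t : ℝ) • Aw - (4 * C * ε * (Fintype.card ι : ℝ)) • (1 : Matrix (Fin d) (Fin d) ℝ))⁻¹.mulVec v := by
  set k : ℝ := 4 * C * ε * (Fintype.card ι : ℝ) with hk
  set B : Matrix (Fin d) (Fin d) ℝ := (t : ℝ) • Aw - k • (1 : Matrix (Fin d) (Fin d) ℝ) with hB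
  -- quadratic form of At
  have quadAt : ∀ v : Fin d → ℝ,
      v ⬝ᵥ At.mulVec v = ∑ a : ι, ((N a : ℝ) * c a) * (x a ⬝ᵥ v)^2 := fun v => by
    rw [hAt]; exact quad_sum _ _ _
  -- quadratic form of t • Aw
  have quadAw : ∀ v : Fin d → ℝ,
      v ⬝ᵥ ((t : ℝ) • Aw).mulVec v = ∑ a : ι, ((t : ℝ) * (w a * c a)) * (x a ⬝ᵥ v)^2 := fun v => by
    rw [hAw, Finset.smul_sum]
    simp_rw [smul_smul]
    exact quad_sum _ _ _
  -- quadratic form of B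
  have quadB : ∀ v : Fin d → ℝ,
      v ⬝ᵥ B.mulVec v = (∑ a : ι, ((t : ℝ) * (w a * c a)) * (x a ⬝ᵥ v)^2) - k * (v ⬝ᵥ v) := by
    intro v
    rw [hB, Matrix.sub_mulVec, dotProduct_sub, quadAw, Matrix.smul_mulVec,
      Matrix.one_mulVec, dotProduct_smul, smul_eq_mul]
  -- Cauchy-Schwarz bound
  have hCS : ∀ (a : ι) (v : Fin d → ℝ), (x a ⬝ᵥ v)^2 ≤ 4 * (v ⬝ᵥ v) := by
    intro a v
    have h1 : (x a ⬝ᵥ v)^2 ≤ (x a ⬝ᵥ x a) * (v ⬝ᵥ v) := by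
      simpa [dotProduct, pow_two] using
        Finset.sum_mul_sq_le_sq_mul_sq Finset.univ (x a) v
    have hvv : 0 ≤ v ⬝ᵥ v := Finset.sum_nonneg fun i _ => mul_self_nonneg _
    nlinarith [hx a]
  have hC0 : ∀ a : ι, 0 ≤ C := fun a => le_trans (hc a).le (hC a)
  -- the gap inequality
  have gap : ∀ v : Fin d → ℝ, v ⬝ᵥ B.mulVec v ≤ v ⬝ᵥ At.mulVec v := by
    intro v
    rw [quadAt, quadB]
    have hvv : 0 ≤ v ⬝ᵥ v := Finset.sum_nonneg fun i _ => mul_self_nonneg _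
    have hterm : ∀ a ∈ Finset.univ (α := ι),
        ((t : ℝ) * (w a * c a)) * (x a ⬝ᵥ v)^2 - ((N a : ℝ) * c a) * (x a ⬝ᵥ v)^2
          ≤ 4 * C * ε * (v ⬝ᵥ v) := by
      intro a _
      have habs := htrack a
      have h1 : (t : ℝ) * w a - (N a : ℝ) ≤ ε := by
        have := abs_le.mp habs; linarith [this.1]
      have hca := hc a
      have hsq : 0 ≤ (x a ⬝ᵥ v)^2 := sq_nonneg _
      have h2 : ((t : ℝ) * (w a * c a)) * (x a ⬝ᵥ v)^2 - ((N a : ℝ) * c a) * (x a ⬝ᵥ v)^2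
          = ((t : ℝ) * w a - (N a : ℝ)) * c a * (x a ⬝ᵥ v)^2 := by ring
      rw [h2]
      have h3 : ((t : ℝ) * w a - (N a : ℝ)) * c a * (x a ⬝ᵥ v)^2
          ≤ ε * c a * (x a ⬝ᵥ v)^2 := by
        apply mul_le_mul_of_nonneg_right _ hsq
        exact mul_le_mul_of_nonneg_right h1 hca.le
      have h4 : ε * c a * (x a ⬝ᵥ v)^2 ≤ ε * C * (4 * (v ⬝ᵥ v)) := by
        have := hCS a v
        have hεc : 0 ≤ ε * c a := mul_nonneg hε hca.le
        have : ε * c a * (x a ⬝ᵥ v)^2 ≤ ε * c a * (4 * (v ⬝ᵥ v)) :=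
          mul_le_mul_of_nonneg_left (hCS a v) hεc
        have h5 : ε * c a * (4 * (v ⬝ᵥ v)) ≤ ε * C * (4 * (v ⬝ᵥ v)) := by
          apply mul_le_mul_of_nonneg_right _ (by linarith : (0:ℝ) ≤ 4 * (v ⬝ᵥ v))
          exact mul_le_mul_of_nonneg_left (hC a) hε
        linarith
      linarith
    have hsum := Finset.sum_le_sum hterm
    rw [Finset.sum_sub_distrib, Finset.sum_const, Finset.card_univ] at hsum
    have : (Fintype.card ι : ℝ) * (4 * C * ε * (v ⬝ᵥ v)) = k * (v ⬝ᵥ v) := by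
      rw [hk]; ring
    rw [nsmul_eq_mul, this] at hsum
    linarith
  -- B is symmetric (real)
  have hBsymm : Bᵀ = B := by
    have := hpos.1
    rw [Matrix.IsHermitian, Matrix.conjTranspose_eq_transpose_of_trivial] at this; exact this
  -- At is hermitian
  have hAtherm : At.IsHermitian := by
    rw [hAt]
    show _ = _
    ext i j
    simp only [Matrix.conjTranspose_apply, Matrix.sum_apply, Matrix.smul_apply,
      Matrix.vecMulVec_apply, smul_eq_mul, star_trivial]
    exact Finset.sum_congr rfl fun a _ => by push_cast; ring
  -- At is positive definite
  have hAtpos : At.PosDef := by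
    refine Matrix.PosDef.of_dotProduct_mulVec_pos hAtherm fun v hv => ?_
    have h1 := hpos.dotProduct_mulVec_pos hv
    rw [star_trivial] at h1 ⊢
    exact lt_of_lt_of_le h1 (gap v)
  -- invertibility facts
  have hAtdet : IsUnit At.det := hAtpos.det_pos.ne'.isUnit
  have hBdet : IsUnit B.det := hpos.det_pos.ne'.isUnit
  intro v
  set u : Fin d → ℝ := At⁻¹.mulVec v with hu
  set y : Fin d → ℝ := B⁻¹.mulVec v with hy
  have h1 : At.mulVec u = v := by
    rw [hu, Matrix.mulVec_mulVec, Matrix.mul_nonsing_inv At hAtdet, Matrix.one_mulVec]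
  have h2 : B.mulVec y = v := by
    rw [hy, Matrix.mulVec_mulVec, Matrix.mul_nonsing_inv B hBdet, Matrix.one_mulVec]
  -- 0 ≤ (u - y) B (u - y)
  have h3 : 0 ≤ (u - y) ⬝ᵥ B.mulVec (u - y) := by
    have := hpos.posSemidef.dotProduct_mulVec_nonneg (u - y)
    rwa [star_trivial] at this
  -- expand
  have hyBu : y ⬝ᵥ B.mulVec u = v ⬝ᵥ u := by
    rw [Matrix.dotProduct_mulVec, ← Matrix.mulVec_transpose, hBsymm, h2]
  have hyBy : y ⬝ᵥ B.mulVec y = y ⬝ᵥ v := by rw [h2]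
  have huBy : u ⬝ᵥ B.mulVec y = u ⬝ᵥ v := by rw [h2]
  have hexp : (u - y) ⬝ᵥ B.mulVec (u - y)
      = u ⬝ᵥ B.mulVec u - u ⬝ᵥ v - v ⬝ᵥ u + y ⬝ᵥ v := by
    rw [Matrix.mulVec_sub, dotProduct_sub, sub_dotProduct, sub_dotProduct,
      huBy, hyBu, hyBy]
    ring
  have huAtu : u ⬝ᵥ At.mulVec u = u ⬝ᵥ v := by rw [h1]
  have hgapu := gap u
  have hcomm1 : v ⬝ᵥ u = u ⬝ᵥ v := dotProduct_comm v u
  have hcomm2 : y ⬝ᵥ v = v ⬝ᵥ y := dotProduct_comm y v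
  show v ⬝ᵥ u ≤ v ⬝ᵥ y
  rw [hcomm1]
  rw [hexp] at h3
  linarith
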